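/- If T_n → T and T_n* → T* in generalised strong resolvent sense, then the limiting approximate point spectrum of (T_n) equals the union of the limiting essential spectrum of (T_n) and the point spectrum of T. -/

import Mathlib

open Filter Topology

noncomputable section

variable {H₀ : Type} [NormedAddCommGroup H₀] [InnerProductSpace ℂ H₀] [CompleteSpace H₀]

/-- Weak convergence `x n ⇀ x₀` in the Hilbert space `H₀`. -/
def WeakTendsto (x : ℕ → H₀) (x₀ : H₀) : Prop :=
  ∀ y : H₀, Tendsto (fun n => (inner ℂ (x n - x₀) y : ℂ)) atTop (nhds 0)

/-- `P` is the orthogonal projection of `H₀` onto the subspace `Hsp`. -/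
def IsOrthProj (Hsp : Submodule ℂ H₀) (P : H₀ →L[ℂ] H₀) : Prop :=
  ∀ x : H₀, P x ∈ Hsp ∧ x - P x ∈ Hspᗮ

/-- The operator `T` with domain `dom` is densely defined in the subspace `Hsp` and maps its
domain into `Hsp`. -/
def ActsIn (Hsp dom : Submodule ℂ H₀) (T : H₀ →ₗ[ℂ] H₀) : Prop :=
  dom ≤ Hsp ∧ dom.topologicalClosure = Hsp ∧ ∀ x ∈ dom, T x ∈ Hsp

/-- The operator `T` with domain `dom` is closed. -/
def IsClosedOp (dom : Submodule ℂ H₀) (T : H₀ →ₗ[ℂ] H₀) : Prop :=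
  ∀ (x : ℕ → H₀) (u v : H₀), (∀ k, x k ∈ dom) →
    Tendsto x atTop (nhds u) → Tendsto (fun k => T (x k)) atTop (nhds v) →
    u ∈ dom ∧ T u = v

/-- `R` is the resolvent `(T - lam)⁻¹` of the operator `T` acting in `Hsp` with domain `dom`,
extended by `0` on the orthogonal complement of `Hsp`. -/
def InResolvent (Hsp dom : Submodule ℂ H₀) (T : H₀ →ₗ[ℂ] H₀) (lam : ℂ)
    (R : H₀ →L[ℂ] H₀) : Prop :=
  (∀ y ∈ Hsp, R y ∈ dom ∧ T (R y) - lam • R y = y) ∧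
  (∀ x ∈ dom, R (T x - lam • x) = x) ∧
  ∀ y ∈ Hspᗮ, R y = 0

/-- `lam` belongs to the resolvent set `ρ(T)`. -/
def InResolventSet (Hsp dom : Submodule ℂ H₀) (T : H₀ →ₗ[ℂ] H₀) (lam : ℂ) : Prop :=
  ∃ R : H₀ →L[ℂ] H₀, InResolvent Hsp dom T lam R

/-- `lam` belongs to the limiting essential spectrum of the sequence `(Tₙ)`. -/
def LimEssSpectrum (domn : ℕ → Submodule ℂ H₀) (Tn : ℕ → H₀ →ₗ[ℂ] H₀) (lam : ℂ) : Prop :=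
  ∃ (φ : ℕ → ℕ) (x : ℕ → H₀), StrictMono φ ∧ (∀ k, x k ∈ domn (φ k)) ∧
    (∀ k, ‖x k‖ = 1) ∧ WeakTendsto x 0 ∧
    Tendsto (fun k => ‖Tn (φ k) (x k) - lam • x k‖) atTop (nhds 0)

/-- `lam` belongs to the limiting essential `eps`-near spectrum of the sequence `(Tₙ)`. -/
def LimEssNear (domn : ℕ → Submodule ℂ H₀) (Tn : ℕ → H₀ →ₗ[ℂ] H₀) (eps : ℝ) (lam : ℂ) :
    Prop :=
  ∃ (φ : ℕ → ℕ) (x : ℕ → H₀), StrictMono φ ∧ (∀ k, x k ∈ domn (φ k)) ∧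
    (∀ k, ‖x k‖ = 1) ∧ WeakTendsto x 0 ∧
    Tendsto (fun k => ‖Tn (φ k) (x k) - lam • x k‖) atTop (nhds eps)

/-- `lam` belongs to the limiting approximate point spectrum of the sequence `(Tₙ)`. -/
def LimApproxSpectrum (domn : ℕ → Submodule ℂ H₀) (Tn : ℕ → H₀ →ₗ[ℂ] H₀) (lam : ℂ) : Prop :=
  ∃ (φ : ℕ → ℕ) (x : ℕ → H₀), StrictMono φ ∧ (∀ k, x k ∈ domn (φ k)) ∧
    (∀ k, ‖x k‖ = 1) ∧
    Tendsto (fun k => ‖Tn (φ k) (x k) - lam • x k‖) atTop (nhds 0)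

/-- `lam` belongs to the essential spectrum of `T`. -/
def EssSpectrum (dom : Submodule ℂ H₀) (T : H₀ →ₗ[ℂ] H₀) (lam : ℂ) : Prop :=
  ∃ x : ℕ → H₀, (∀ k, x k ∈ dom) ∧ (∀ k, ‖x k‖ = 1) ∧ WeakTendsto x 0 ∧
    Tendsto (fun k => ‖T (x k) - lam • x k‖) atTop (nhds 0)

/-- `lam` belongs to the essential `eps`-near spectrum of `T`. -/
def EssNear (dom : Submodule ℂ H₀) (T : H₀ →ₗ[ℂ] H₀) (eps : ℝ) (lam : ℂ) : Prop :=
  ∃ x : ℕ → H₀, (∀ k, x k ∈ dom) ∧ (∀ k, ‖x k‖ = 1) ∧ WeakTendsto x 0 ∧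
    Tendsto (fun k => ‖T (x k) - lam • x k‖) atTop (nhds eps)

/-- `lam` belongs to the approximate point spectrum of `T`. -/
def ApproxSpectrum (dom : Submodule ℂ H₀) (T : H₀ →ₗ[ℂ] H₀) (lam : ℂ) : Prop :=
  ∃ x : ℕ → H₀, (∀ k, x k ∈ dom) ∧ (∀ k, ‖x k‖ = 1) ∧
    Tendsto (fun k => ‖T (x k) - lam • x k‖) atTop (nhds 0)

/-- `lam` belongs to the point spectrum of `T`. -/
def PointSpectrum (dom : Submodule ℂ H₀) (T : H₀ →ₗ[ℂ] H₀) (lam : ℂ) : Prop :=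
  ∃ x ∈ dom, x ≠ 0 ∧ T x = lam • x

/-- `lam` belongs to the `eps`-approximate point spectrum of `T`. -/
def PseudoAppSpectrum (dom : Submodule ℂ H₀) (T : H₀ →ₗ[ℂ] H₀) (eps : ℝ) (lam : ℂ) : Prop :=
  ∃ x ∈ dom, ‖x‖ = 1 ∧ ‖T x - lam • x‖ < eps

/-- `lam` belongs to the spectrum of `T` acting in `Hsp`. -/
def InSpec (Hsp dom : Submodule ℂ H₀) (T : H₀ →ₗ[ℂ] H₀) (lam : ℂ) : Prop :=
  ¬ InResolventSet Hsp dom T lam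

/-- `lam` belongs to the `eps`-pseudospectrum of `T` acting in `Hsp`
(with the convention `‖(T-lam)⁻¹‖ = ∞` on the spectrum). -/
def InPseudoSpec (Hsp dom : Submodule ℂ H₀) (T : H₀ →ₗ[ℂ] H₀) (eps : ℝ) (lam : ℂ) : Prop :=
  (¬ InResolventSet Hsp dom T lam) ∨
    ∃ R : H₀ →L[ℂ] H₀, InResolvent Hsp dom T lam R ∧ 1 / eps < ‖R‖

/-- Generalised strong resolvent convergence `Tₙ → T`. -/
def GSRConv (Hsp dom : Submodule ℂ H₀) (T : H₀ →ₗ[ℂ] H₀)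
    (Hn domn : ℕ → Submodule ℂ H₀) (Tn : ℕ → H₀ →ₗ[ℂ] H₀) : Prop :=
  ∃ (n₀ : ℕ) (lam₀ : ℂ) (R : H₀ →L[ℂ] H₀) (Rn : ℕ → H₀ →L[ℂ] H₀),
    InResolvent Hsp dom T lam₀ R ∧
    (∀ n, n ≥ n₀ → InResolvent (Hn n) (domn n) (Tn n) lam₀ (Rn n)) ∧
    ∀ y : H₀, Tendsto (fun n => Rn n y) atTop (nhds (R y))

/-- Generalised norm resolvent convergence `Tₙ → T`. -/
def GNRConv (Hsp dom : Submodule ℂ H₀) (T : H₀ →ₗ[ℂ] H₀)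
    (Hn domn : ℕ → Submodule ℂ H₀) (Tn : ℕ → H₀ →ₗ[ℂ] H₀) : Prop :=
  ∃ (n₀ : ℕ) (lam₀ : ℂ) (R : H₀ →L[ℂ] H₀) (Rn : ℕ → H₀ →L[ℂ] H₀),
    InResolvent Hsp dom T lam₀ R ∧
    (∀ n, n ≥ n₀ → InResolvent (Hn n) (domn n) (Tn n) lam₀ (Rn n)) ∧
    Tendsto (fun n => ‖Rn n - R‖) atTop (nhds 0)

/-- The sequence of bounded operators `(Bₙ)`, `Bₙ ∈ L(Hₙ)`, is discretely compact: images of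
bounded sequences `xₙ ∈ Hₙ` have subsequences converging in norm to an element of `Hsp`. -/
def DiscretelyCompact (Hsp : Submodule ℂ H₀) (Hn : ℕ → Submodule ℂ H₀)
    (B : ℕ → H₀ →L[ℂ] H₀) : Prop :=
  ∀ (φ : ℕ → ℕ) (x : ℕ → H₀), StrictMono φ → (∀ k, x k ∈ Hn (φ k)) →
    (∃ C : ℝ, ∀ k, ‖x k‖ ≤ C) →
    ∃ (ψ : ℕ → ℕ) (z : H₀), StrictMono ψ ∧ z ∈ Hsp ∧
      Tendsto (fun k => B (φ (ψ k)) (x (ψ k))) atTop (nhds z)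

/-- `S` with domain `domS` is the Hilbert-space adjoint of the densely defined operator `T`
acting in `Hsp` with domain `dom`. -/
def IsAdjointOp (Hsp dom : Submodule ℂ H₀) (T : H₀ →ₗ[ℂ] H₀)
    (domS : Submodule ℂ H₀) (S : H₀ →ₗ[ℂ] H₀) : Prop :=
  domS ≤ Hsp ∧ ∀ y ∈ Hsp, ∀ z ∈ Hsp,
    ((y ∈ domS ∧ S y = z) ↔ ∀ x ∈ dom, (inner ℂ (T x) y : ℂ) = inner ℂ x z)

/-- The sequence of bounded operators `(Aₙ)` converges strongly. -/
def StrongConvSeq (A : ℕ → H₀ →L[ℂ] H₀) : Prop :=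
  ∃ A₀ : H₀ →L[ℂ] H₀, ∀ y : H₀, Tendsto (fun n => A n y) atTop (nhds (A₀ y))

/-- `lam` belongs to the region of boundedness `Δ_b((Tₙ))`. -/
def InRegionOfBoundedness (Hn domn : ℕ → Submodule ℂ H₀) (Tn : ℕ → H₀ →ₗ[ℂ] H₀)
    (lam : ℂ) : Prop :=
  ∃ (n₀ : ℕ) (C : ℝ) (Rn : ℕ → H₀ →L[ℂ] H₀),
    ∀ n, n ≥ n₀ → InResolvent (Hn n) (domn n) (Tn n) lam (Rn n) ∧ ‖Rn n‖ ≤ C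


theorem exists_weak_subseq [TopologicalSpace.SeparableSpace H₀] (x : ℕ → H₀)
    (hb : ∀ k, ‖x k‖ ≤ 1) :
    ∃ (ψ : ℕ → ℕ) (x₀ : H₀), StrictMono ψ ∧ WeakTendsto (fun k => x (ψ k)) x₀ := by
  haveI : Nonempty H₀ := ⟨0⟩
  set e : ℕ → H₀ := TopologicalSpace.denseSeq H₀ with he_def
  have he : DenseRange e := TopologicalSpace.denseRange_denseSeq H₀
  set s : Set (ℕ → ℂ) := Set.univ.pi fun j => Metric.closedBall 0 ‖e j‖ with hs_def
  have hsc : IsCompact s := isCompact_univ_pi fun j => isCompact_closedBall 0 ‖e j‖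
  have hFs : ∀ k, (fun j => (inner ℂ (x k) (e j) : ℂ)) ∈ s := by
    intro k
    rw [hs_def, Set.mem_univ_pi]
    intro j
    rw [Metric.mem_closedBall, dist_zero_right]
    calc ‖(inner ℂ (x k) (e j) : ℂ)‖ ≤ ‖x k‖ * ‖e j‖ := norm_inner_le_norm _ _
      _ ≤ 1 * ‖e j‖ := by gcongr; exact hb k
      _ = ‖e j‖ := one_mul _
  obtain ⟨f, -, ψ, hψ, hconv⟩ := hsc.isSeqCompact hFs
  have hpt : ∀ j, Tendsto (fun k => (inner ℂ (x (ψ k)) (e j) : ℂ)) atTop (𝓝 (f j)) := by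
    intro j
    exact (tendsto_pi_nhds.mp hconv) j
  have hC : ∀ y : H₀, ∃ L : ℂ, Tendsto (fun k => (inner ℂ (x (ψ k)) y : ℂ)) atTop (𝓝 L) := by
    intro y
    have hcs : CauchySeq (fun k => (inner ℂ (x (ψ k)) y : ℂ)) := by
      rw [Metric.cauchySeq_iff]
      intro ε hε
      obtain ⟨j, hj⟩ := he.exists_dist_lt y (show (0:ℝ) < ε/4 by linarith)
      have hcau := (hpt j).cauchySeq
      rw [Metric.cauchySeq_iff] at hcau
      obtain ⟨N, hN⟩ := hcau (ε/2) (by linarith)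
      refine ⟨N, fun m hm n hn => ?_⟩
      have key : (inner ℂ (x (ψ m)) y : ℂ) - inner ℂ (x (ψ n)) y
          = ((inner ℂ (x (ψ m)) (e j) : ℂ) - inner ℂ (x (ψ n)) (e j))
            + ((inner ℂ (x (ψ m)) (y - e j) : ℂ) - inner ℂ (x (ψ n)) (y - e j)) := by
        simp [inner_sub_right]; ring
      have h2 : ∀ k, ‖(inner ℂ (x (ψ k)) (y - e j) : ℂ)‖ ≤ ε/4 := by
        intro k
        calc ‖(inner ℂ (x (ψ k)) (y - e j) : ℂ)‖ ≤ ‖x (ψ k)‖ * ‖y - e j‖ := norm_inner_le_norm _ _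
          _ ≤ 1 * ‖y - e j‖ := by gcongr; exact hb _
          _ = dist y (e j) := by rw [one_mul, dist_eq_norm]
          _ ≤ ε/4 := le_of_lt hj
      have h1 := hN m hm n hn
      rw [dist_eq_norm] at h1 ⊢
      rw [key]
      calc ‖_ + _‖ ≤ ‖(inner ℂ (x (ψ m)) (e j) : ℂ) - inner ℂ (x (ψ n)) (e j)‖
            + ‖(inner ℂ (x (ψ m)) (y - e j) : ℂ) - inner ℂ (x (ψ n)) (y - e j)‖ := norm_add_le _ _
        _ ≤ ‖(inner ℂ (x (ψ m)) (e j) : ℂ) - inner ℂ (x (ψ n)) (e j)‖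
            + (‖(inner ℂ (x (ψ m)) (y - e j) : ℂ)‖ + ‖(inner ℂ (x (ψ n)) (y - e j) : ℂ)‖) := by
            gcongr; exact norm_sub_le _ _
        _ < ε := by linarith [h1, h2 m, h2 n]
    exact cauchySeq_tendsto_of_complete hcs
  choose L hL using hC
  have hadd : ∀ y z : H₀, L (y + z) = L y + L z := by
    intro y z
    refine tendsto_nhds_unique (hL (y+z)) ?_
    have := (hL y).add (hL z)
    simpa [inner_add_right] using this
  have hsmul : ∀ (c : ℂ) (y : H₀), L (c • y) = c * L y := by
    intro c y
    refine tendsto_nhds_unique (hL (c • y)) ?_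
    have := (hL y).const_mul c
    simpa [inner_smul_right] using this
  have hbound : ∀ y, ‖L y‖ ≤ 1 * ‖y‖ := by
    intro y
    refine le_of_tendsto (hL y).norm (Filter.Eventually.of_forall fun k => ?_)
    calc ‖(inner ℂ (x (ψ k)) y : ℂ)‖ ≤ ‖x (ψ k)‖ * ‖y‖ := norm_inner_le_norm _ _
      _ ≤ 1 * ‖y‖ := by gcongr; exact hb _
  let Lf : H₀ →L[ℂ] ℂ :=
    LinearMap.mkContinuous
      { toFun := L, map_add' := hadd, map_smul' := hsmul } 1 hbound
  refine ⟨ψ, (InnerProductSpace.toDual ℂ H₀).symm Lf, hψ, ?_⟩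
  intro y
  have hx₀ : (inner ℂ ((InnerProductSpace.toDual ℂ H₀).symm Lf) y : ℂ) = L y :=
    InnerProductSpace.toDual_symm_apply
  have : Tendsto (fun k => (inner ℂ (x (ψ k)) y : ℂ) - L y) atTop (𝓝 (L y - L y)) :=
    (hL y).sub_const _
  rw [sub_self] at this
  refine this.congr fun k => ?_
  rw [inner_sub_left, hx₀]

set_option linter.unusedSectionVars false
section AuxLemmas

variable {H₀ : Type} [NormedAddCommGroup H₀] [InnerProductSpace ℂ H₀] [CompleteSpace H₀]

lemma orthProj_eq_self {Hsp : Submodule ℂ H₀} {P : H₀ →L[ℂ] H₀} (hP : IsOrthProj Hsp P)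
    {x : H₀} (hx : x ∈ Hsp) : P x = x := by
  have h := (Submodule.mem_orthogonal _ _).mp (hP x).2 (x - P x) (Hsp.sub_mem hx (hP x).1)
  rw [inner_self_eq_zero, sub_eq_zero] at h
  exact h.symm

lemma orthProj_eq_zero {Hsp : Submodule ℂ H₀} {P : H₀ →L[ℂ] H₀} (hP : IsOrthProj Hsp P)
    {u : H₀} (hu : u ∈ Hspᗮ) : P u = 0 := by
  have hmem : P u ∈ Hspᗮ := by
    have : P u = u - (u - P u) := by abel
    rw [this]
    exact Hspᗮ.sub_mem hu (hP u).2
  have h := (Submodule.mem_orthogonal _ _).mp hmem (P u) (hP u).1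
  rwa [inner_self_eq_zero] at h

lemma inner_proj_right {Hn' : Submodule ℂ H₀} {Pn' : H₀ →L[ℂ] H₀} (hPn : IsOrthProj Hn' Pn')
    {v : H₀} (hv : v ∈ Hn') (u : H₀) : (inner ℂ v u : ℂ) = inner ℂ v (Pn' u) := by
  have h : (inner ℂ v (u - Pn' u) : ℂ) = 0 := (Submodule.mem_orthogonal _ _).mp (hPn u).2 v hv
  rw [inner_sub_right, sub_eq_zero] at h
  exact h

lemma resolvent_ext {Hsp dom : Submodule ℂ H₀} {T : H₀ →ₗ[ℂ] H₀} {lam : ℂ} {R P : H₀ →L[ℂ] H₀}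
    (hR : InResolvent Hsp dom T lam R) (hP : IsOrthProj Hsp P) (y : H₀) : R y = R (P y) := by
  have h0 : R (y - P y) = 0 := hR.2.2 _ (hP y).2
  have : R y = R (P y) + R (y - P y) := by rw [← map_add]; congr 1; abel
  rw [this, h0, add_zero]

lemma mem_of_orthogonal {Hsp : Submodule ℂ H₀} (hcl : IsClosed ((Hsp : Set H₀))) {v : H₀}
    (h : ∀ u ∈ Hspᗮ, (inner ℂ v u : ℂ) = 0) : v ∈ Hsp := by
  haveI : CompleteSpace Hsp := hcl.completeSpace_coe
  rw [← Submodule.orthogonal_orthogonal Hsp, Submodule.mem_orthogonal]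
  intro u hu
  exact inner_eq_zero_symm.mp (h u hu)

lemma adjoint_resolvent {Hsp dom domS : Submodule ℂ H₀} {T S : H₀ →ₗ[ℂ] H₀} {lam₀ : ℂ}
    {R : H₀ →L[ℂ] H₀} (hHcl : IsClosed ((Hsp : Set H₀)))
    (hR : InResolvent Hsp dom T lam₀ R) (hadj : IsAdjointOp Hsp dom T domS S)
    {w : H₀} (hw : w ∈ Hsp) :
    R.adjoint w ∈ Hsp ∧ R.adjoint w ∈ domS ∧
      S (R.adjoint w) = w + (starRingEnd ℂ lam₀) • R.adjoint w := by
  have hmem : R.adjoint w ∈ Hsp := by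
    apply mem_of_orthogonal hHcl
    intro u hu
    rw [ContinuousLinearMap.adjoint_inner_left, hR.2.2 u hu, inner_zero_right]
  have hz : w + (starRingEnd ℂ lam₀) • R.adjoint w ∈ Hsp :=
    Hsp.add_mem hw (Hsp.smul_mem _ hmem)
  have hforall : ∀ x ∈ dom, (inner ℂ (T x) (R.adjoint w) : ℂ)
      = inner ℂ x (w + (starRingEnd ℂ lam₀) • R.adjoint w) := by
    intro x hx
    have h1 : R (T x) = x + lam₀ • R x := by
      have h2 := hR.2.1 x hx
      rw [map_sub, map_smul] at h2
      exact sub_eq_iff_eq_add.mp h2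
    rw [ContinuousLinearMap.adjoint_inner_right, h1, inner_add_left, inner_smul_left,
      inner_add_right, inner_smul_right, ContinuousLinearMap.adjoint_inner_right]
  have := ((hadj.2 (R.adjoint w) hmem _ hz).mpr hforall)
  exact ⟨hmem, this.1, this.2⟩

lemma approx_seq {Hsp domA : Submodule ℂ H₀} {A : H₀ →ₗ[ℂ] H₀} {Hn domn : ℕ → Submodule ℂ H₀}
    {An : ℕ → H₀ →ₗ[ℂ] H₀} {P : H₀ →L[ℂ] H₀} {Pn : ℕ → H₀ →L[ℂ] H₀}
    (hP : IsOrthProj Hsp P) (hPn : ∀ n, IsOrthProj (Hn n) (Pn n))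
    (hPconv : ∀ y : H₀, Tendsto (fun n => Pn n y) atTop (nhds (P y)))
    (hdomn : ∀ n, domn n ≤ Hn n)
    (hconv : GSRConv Hsp domA A Hn domn An)
    {y z : H₀} (hy : y ∈ domA) (hyH : y ∈ Hsp) (hz : z ∈ Hsp) (hzA : A y = z) :
    ∃ (m₀ : ℕ) (yn : ℕ → H₀), (∀ n, n ≥ m₀ → yn n ∈ domn n ∧ An n (yn n) ∈ Hn n) ∧
      Tendsto yn atTop (nhds y) ∧ Tendsto (fun n => An n (yn n)) atTop (nhds z) := by
  obtain ⟨n₀, μ, R, Rn, hR, hRn, hst⟩ := hconv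
  have hwH : z - μ • y ∈ Hsp := Hsp.sub_mem hz (Hsp.smul_mem _ hyH)
  have key : ∀ n, n ≥ n₀ →
      (Rn n (z - μ • y) ∈ domn n ∧
        An n (Rn n (z - μ • y)) = Pn n (z - μ • y) + μ • Rn n (z - μ • y)) := by
    intro n hn
    have hext : Rn n (z - μ • y) = Rn n (Pn n (z - μ • y)) := resolvent_ext (hRn n hn) (hPn n) _
    have h1 := (hRn n hn).1 (Pn n (z - μ • y)) (hPn n _).1
    constructor
    · rw [hext]; exact h1.1
    · have h2 := h1.2
      rw [← hext] at h2
      exact sub_eq_iff_eq_add.mp h2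
  refine ⟨n₀, fun n => Rn n (z - μ • y), ?_, ?_, ?_⟩
  · intro n hn
    refine ⟨(key n hn).1, ?_⟩
    rw [(key n hn).2]
    exact (Hn n).add_mem (hPn n _).1 ((Hn n).smul_mem _ (hdomn n (key n hn).1))
  · have hRw : R (z - μ • y) = y := by
      have := hR.2.1 y hy
      rwa [hzA] at this
    have := hst (z - μ • y)
    rwa [hRw] at this
  · have hlim : Tendsto (fun n => Pn n (z - μ • y) + μ • Rn n (z - μ • y)) atTop
        (nhds (P (z - μ • y) + μ • R (z - μ • y))) :=
      (hPconv _).add ((hst _).const_smul μ)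
    have hRw : R (z - μ • y) = y := by
      have := hR.2.1 y hy
      rwa [hzA] at this
    rw [hRw, orthProj_eq_self hP hwH, sub_add_cancel] at hlim
    refine hlim.congr' ?_
    filter_upwards [eventually_ge_atTop n₀] with n hn
    exact ((key n hn).2).symm

lemma weak_inner_tendsto {x : ℕ → H₀} {x₀ : H₀} (hx : WeakTendsto x x₀) {C : ℝ}
    (hb : ∀ k, ‖x k‖ ≤ C) {z : ℕ → H₀} {z₀ : H₀} (hz : Tendsto z atTop (nhds z₀)) :
    Tendsto (fun k => (inner ℂ (x k) (z k) : ℂ)) atTop (nhds (inner ℂ x₀ z₀)) := by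
  have h1 : Tendsto (fun k => (inner ℂ (x k - x₀) z₀ : ℂ)) atTop (nhds 0) := hx z₀
  have h2 : Tendsto (fun k => (inner ℂ (x k) (z k - z₀) : ℂ)) atTop (nhds 0) := by
    have hz0 : Tendsto (fun k => z k - z₀) atTop (nhds 0) := by
      simpa using hz.sub_const z₀
    have hg : Tendsto (fun k => C * ‖z k - z₀‖) atTop (nhds 0) := by
      simpa using hz0.norm.const_mul C
    exact squeeze_zero_norm
      (fun k => (norm_inner_le_norm _ _).trans
        (mul_le_mul_of_nonneg_right (hb k) (norm_nonneg _))) hg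
  have h3 := (h1.add h2).add_const (inner ℂ x₀ z₀ : ℂ)
  rw [add_zero, zero_add] at h3
  refine h3.congr fun k => ?_
  rw [inner_sub_left, inner_sub_right]
  ring

end AuxLemmas



theorem stmt11 [TopologicalSpace.SeparableSpace H₀]
    (Hsp dom : Submodule ℂ H₀) (T : H₀ →ₗ[ℂ] H₀)
    (hHcl : IsClosed ((Hsp : Set H₀)))
    (hT : ActsIn Hsp dom T) (hTcl : IsClosedOp dom T)
    (Hn domn : ℕ → Submodule ℂ H₀) (Tn : ℕ → H₀ →ₗ[ℂ] H₀)
    (hHncl : ∀ n, IsClosed ((Hn n : Set H₀)))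
    (hTn : ∀ n, ActsIn (Hn n) (domn n) (Tn n))
    (hTncl : ∀ n, IsClosedOp (domn n) (Tn n))
    (P : H₀ →L[ℂ] H₀) (Pn : ℕ → H₀ →L[ℂ] H₀)
    (hP : IsOrthProj Hsp P) (hPn : ∀ n, IsOrthProj (Hn n) (Pn n))
    (hPconv : ∀ y : H₀, Tendsto (fun n => Pn n y) atTop (nhds (P y)))
    (domS : Submodule ℂ H₀) (S : H₀ →ₗ[ℂ] H₀)
    (domSn : ℕ → Submodule ℂ H₀) (Sn : ℕ → H₀ →ₗ[ℂ] H₀)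
    (hadjT : IsAdjointOp Hsp dom T domS S)
    (hadjn : ∀ n, IsAdjointOp (Hn n) (domn n) (Tn n) (domSn n) (Sn n))
    (hconv : GSRConv Hsp dom T Hn domn Tn)
    (hconvadj : GSRConv Hsp domS S Hn domSn Sn) :
    {lam : ℂ | LimApproxSpectrum domn Tn lam}
      = {lam : ℂ | LimEssSpectrum domn Tn lam} ∪ {lam : ℂ | PointSpectrum dom T lam} := by
  ext lam
  simp only [Set.mem_setOf_eq, Set.mem_union]
  constructor
  · rintro ⟨φ, x, hφ, hxdom, hxnorm, hxlim⟩
    obtain ⟨ψ, x₀, hψ, hweak⟩ := exists_weak_subseq x (fun k => (hxnorm k).le)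
    by_cases hx0 : x₀ = 0
    · left
      subst hx0
      exact ⟨φ ∘ ψ, fun k => x (ψ k), hφ.comp hψ, fun k => hxdom (ψ k),
        fun k => hxnorm (ψ k), hweak, hxlim.comp hψ.tendsto_atTop⟩
    · right
      obtain ⟨n₀, lam₀, R, Rn, hR, hRn, hRst⟩ := hconv
      have hφ' : StrictMono (fun k => φ (ψ k)) := hφ.comp hψ
      have hb' : ∀ k, ‖x (ψ k)‖ ≤ (1:ℝ) := fun k => (hxnorm (ψ k)).le
      have hlim' : Tendsto (fun k => ‖Tn (φ (ψ k)) (x (ψ k)) - lam • x (ψ k)‖)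
          atTop (nhds 0) := hxlim.comp hψ.tendsto_atTop
      have hvlim : Tendsto (fun k => Tn (φ (ψ k)) (x (ψ k)) - lam • x (ψ k))
          atTop (nhds 0) := by
        rw [tendsto_zero_iff_norm_tendsto_zero]
        exact hlim'
      -- x₀ ∈ Hsp
      have hx₀Hsp : x₀ ∈ Hsp := by
        apply mem_of_orthogonal hHcl
        intro u hu
        have t1 : Tendsto (fun k => (inner ℂ (x (ψ k)) (Pn (φ (ψ k)) u) : ℂ)) atTop
            (nhds (inner ℂ x₀ (P u))) :=
          weak_inner_tendsto hweak hb' ((hPconv u).comp hφ'.tendsto_atTop)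
        have t2 : Tendsto (fun k => (inner ℂ (x (ψ k)) u : ℂ)) atTop (nhds (inner ℂ x₀ u)) := by
          have h := (hweak u).add_const (inner ℂ x₀ u : ℂ)
          rw [zero_add] at h
          refine h.congr fun k => ?_
          rw [inner_sub_left]
          ring
        have hequ : (inner ℂ x₀ u : ℂ) = inner ℂ x₀ (P u) := by
          refine tendsto_nhds_unique t2 (t1.congr fun k => ?_)
          exact (inner_proj_right (hPn (φ (ψ k))) ((hTn (φ (ψ k))).1 (hxdom (ψ k))) u).symm
        rwa [orthProj_eq_zero hP hu, inner_zero_right] at hequ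
      -- key identity
      have hkey : ∀ w ∈ Hsp, (inner ℂ x₀ w : ℂ) = inner ℂ ((lam - lam₀) • x₀) (R.adjoint w) := by
        intro w hw
        obtain ⟨hyHsp, hydom, hSy⟩ := adjoint_resolvent hHcl hR hadjT hw
        have hzSHsp : w + (starRingEnd ℂ lam₀) • R.adjoint w ∈ Hsp :=
          Hsp.add_mem hw (Hsp.smul_mem _ hyHsp)
        obtain ⟨m₀, yn, hyn, hynlim, hSynlim⟩ :=
          approx_seq hP hPn hPconv (fun n => (hadjn n).1) hconvadj hydom hyHsp hzSHsp hSy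
        have hEv : ∀ᶠ k in atTop,
            (inner ℂ (Tn (φ (ψ k)) (x (ψ k)) - lam • x (ψ k)) (yn (φ (ψ k))) : ℂ)
            = inner ℂ (x (ψ k))
                (Sn (φ (ψ k)) (yn (φ (ψ k))) - (starRingEnd ℂ lam) • yn (φ (ψ k))) := by
          filter_upwards [hφ'.tendsto_atTop.eventually_ge_atTop m₀] with k hk
          obtain ⟨hy1, hy2⟩ := hyn (φ (ψ k)) hk
          have hadjeq : (inner ℂ (Tn (φ (ψ k)) (x (ψ k))) (yn (φ (ψ k))) : ℂ)
              = inner ℂ (x (ψ k)) (Sn (φ (ψ k)) (yn (φ (ψ k)))) :=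
            (((hadjn (φ (ψ k))).2 (yn (φ (ψ k))) ((hadjn (φ (ψ k))).1 hy1)
              (Sn (φ (ψ k)) (yn (φ (ψ k)))) hy2).mp ⟨hy1, rfl⟩) (x (ψ k)) (hxdom (ψ k))
          rw [inner_sub_left, inner_smul_left, inner_sub_right, inner_smul_right, hadjeq]
        have tL : Tendsto
            (fun k => (inner ℂ (Tn (φ (ψ k)) (x (ψ k)) - lam • x (ψ k)) (yn (φ (ψ k))) : ℂ))
            atTop (nhds 0) := by
          have h := Filter.Tendsto.inner (𝕜 := ℂ) hvlim (hynlim.comp hφ'.tendsto_atTop)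
          rw [inner_zero_left] at h
          exact h
        have tR : Tendsto (fun k => (inner ℂ (x (ψ k))
            (Sn (φ (ψ k)) (yn (φ (ψ k))) - (starRingEnd ℂ lam) • yn (φ (ψ k))) : ℂ)) atTop
            (nhds (inner ℂ x₀ ((w + (starRingEnd ℂ lam₀) • R.adjoint w)
              - (starRingEnd ℂ lam) • R.adjoint w))) := by
          apply weak_inner_tendsto hweak hb'
          exact (hSynlim.comp hφ'.tendsto_atTop).sub
            ((hynlim.comp hφ'.tendsto_atTop).const_smul _)
        have h0 : (inner ℂ x₀ ((w + (starRingEnd ℂ lam₀) • R.adjoint w)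
            - (starRingEnd ℂ lam) • R.adjoint w) : ℂ) = 0 :=
          (tendsto_nhds_unique (tL.congr' hEv) tR).symm
        rw [inner_sub_right, inner_add_right, inner_smul_right, inner_smul_right] at h0
        rw [inner_smul_left, map_sub]
        linear_combination h0
      -- conclude
      have huHsp : (lam - lam₀) • x₀ ∈ Hsp := Hsp.smul_mem _ hx₀Hsp
      have hRu := hR.1 _ huHsp
      have hx₀eq : x₀ = R ((lam - lam₀) • x₀) := by
        have hmem : x₀ - R ((lam - lam₀) • x₀) ∈ Hsp :=
          Hsp.sub_mem hx₀Hsp (hT.1 hRu.1)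
        have h := hkey _ hmem
        rw [ContinuousLinearMap.adjoint_inner_right] at h
        have h2 : (inner ℂ (x₀ - R ((lam - lam₀) • x₀)) (x₀ - R ((lam - lam₀) • x₀)) : ℂ) = 0 := by
          rw [inner_sub_left, h, sub_self]
        rw [inner_self_eq_zero, sub_eq_zero] at h2
        exact h2
      refine ⟨x₀, ?_, hx0, ?_⟩
      · rw [hx₀eq]; exact hRu.1
      · have h2 := hRu.2
        rw [← hx₀eq] at h2
        have h3 : T x₀ = (lam - lam₀) • x₀ + lam₀ • x₀ := sub_eq_iff_eq_add.mp h2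
        rw [h3, sub_smul]
        abel
  · rintro (hE | hPt)
    · obtain ⟨φ, x, hφ, h1, h2, h3, h4⟩ := hE
      exact ⟨φ, x, hφ, h1, h2, h4⟩
    · obtain ⟨v, hv, hv0, hTv⟩ := hPt
      have hvHsp : v ∈ Hsp := hT.1 hv
      have hz : (lam • v : H₀) ∈ Hsp := Hsp.smul_mem _ hvHsp
      obtain ⟨m₀, xn, hxn, hxnlim, hTxnlim⟩ :=
        approx_seq hP hPn hPconv (fun n => (hTn n).1) hconv hv hvHsp hz hTv
      have hdiff : Tendsto (fun n => Tn n (xn n) - lam • xn n) atTop (nhds 0) := by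
        have h := hTxnlim.sub (hxnlim.const_smul lam)
        simpa using h
      have hnrm : Tendsto (fun n => ‖xn n‖) atTop (nhds ‖v‖) := hxnlim.norm
      have hv0' : ‖v‖ ≠ 0 := norm_ne_zero_iff.mpr hv0
      obtain ⟨N₁, hN₁⟩ := eventually_atTop.mp (hnrm.eventually_ne hv0')
      set N := max m₀ N₁ with hN
      have hmono : StrictMono (fun k => N + k) := fun a b h => by simpa using Nat.add_lt_add_left h N
      have hshift : Tendsto (fun k => N + k) atTop atTop := hmono.tendsto_atTop
      have hne : ∀ k, ‖xn (N + k)‖ ≠ 0 := fun k => hN₁ (N + k) (le_trans (le_max_right _ _) (Nat.le_add_right N k))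
      have hge : ∀ k, N + k ≥ m₀ := fun k => le_trans (le_max_left _ _) (Nat.le_add_right N k)
      refine ⟨fun k => N + k, fun k => ((‖xn (N + k)‖ : ℂ))⁻¹ • xn (N + k), hmono, ?_, ?_, ?_⟩
      · intro k
        exact (domn (N + k)).smul_mem _ (hxn (N + k) (hge k)).1
      · intro k
        rw [norm_smul, norm_inv, Complex.norm_real, Real.norm_eq_abs,
          abs_of_nonneg (norm_nonneg _), inv_mul_cancel₀ (hne k)]
      · have heq : ∀ k, Tn (N + k) (((‖xn (N + k)‖ : ℂ))⁻¹ • xn (N + k))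
            - lam • (((‖xn (N + k)‖ : ℂ))⁻¹ • xn (N + k))
            = ((‖xn (N + k)‖ : ℂ))⁻¹ • (Tn (N + k) (xn (N + k)) - lam • xn (N + k)) := by
          intro k
          rw [map_smul, smul_sub, smul_comm]
        have t1 : Tendsto (fun k => ‖xn (N + k)‖⁻¹ * ‖Tn (N + k) (xn (N + k)) - lam • xn (N + k)‖)
            atTop (nhds (‖v‖⁻¹ * 0)) := by
          apply Tendsto.mul
          · exact (hnrm.comp hshift).inv₀ hv0'
          · have h := hdiff.norm.comp hshift
            rw [norm_zero] at h
            exact h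
        rw [mul_zero] at t1
        refine t1.congr fun k => ?_
        rw [heq k, norm_smul, norm_inv, Complex.norm_real, Real.norm_eq_abs,
          abs_of_nonneg (norm_nonneg _)]

end
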